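/- arXiv:1810.01118 — 2 statements merged into one kernel-verified Lean document; each statement's English description precedes it below -/
import Mathlib

section
/- Let (X, d) be a complete separable metric space, Z a standard Borel space, let P_X be a non-atomic Borel probability measure on X, P_Z a Borel probability measure on Z, G : Z → X a Borel measurable map, and c : X × X → ℝ a continuous nonnegative cost function. Then W_c(P_X, G_#P_Z) = inf over Markov kernels κ from X to Z whose aggregated posterior ∫ κ(x, ·) dP_X(x) equals P_Z, of ∬ c(x, G(z)) dκ(x, dz) dP_X(x). -/
open MeasureTheory ENNReal NNReal ProbabilityTheory

noncomputable def Wc {S : Type*} [MeasurableSpace S] (c : S × S → ℝ)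
    (μ ν : Measure S) : ℝ≥0∞ :=
  ⨅ (Γ : Measure (S × S)) (_ : Γ.map Prod.fst = μ ∧ Γ.map Prod.snd = ν),
    ∫⁻ xy, ENNReal.ofReal (c xy) ∂Γ

lemma snd_compProd_eq_bind {α β : Type*} [MeasurableSpace α] [MeasurableSpace β]
    (μ : Measure α) [SFinite μ] (κ : Kernel α β) [IsSFiniteKernel κ] :
    (μ ⊗ₘ κ).snd = μ.bind (fun x => κ x) := by
  ext s hs
  rw [Measure.snd_apply hs, Measure.compProd_apply (measurable_snd hs),
    Measure.bind_apply hs (Kernel.measurable κ).aemeasurable]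
  rfl

/-- For a non-atomic Borel probability measure `P_X` on a complete separable metric space
`X`, a prior `P_Z` on a standard Borel space `Z`, a measurable decoder `G : Z → X` and a
continuous nonnegative cost `c`, the OT-cost `W_c(P_X, G_#P_Z)` equals the infimum, over
all Markov kernels `κ : X → Z` (probabilistic encoders) whose aggregated posterior
`∫ κ(x, ·) dP_X` equals the prior `P_Z`, of `∬ c(x, G(z)) κ(x, dz) dP_X(x)`. -/
theorem wc_eq_inf_probabilistic_encoders
    {X Z : Type*} [MetricSpace X] [CompleteSpace X] [TopologicalSpace.SeparableSpace X]
    [MeasurableSpace X] [BorelSpace X]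
    [MeasurableSpace Z] [StandardBorelSpace Z]
    (P_X : Measure X) [IsProbabilityMeasure P_X] [NullSingletonClass P_X]
    (P_Z : Measure Z) [IsProbabilityMeasure P_Z]
    (G : Z → X) (hG : Measurable G)
    (c : X × X → ℝ) (hc : Continuous c) (hc0 : ∀ xy, 0 ≤ c xy) :
    Wc c P_X (P_Z.map G) =
      ⨅ (κ : Kernel X Z) (_ : IsMarkovKernel κ) (_ : P_X.bind (fun x => κ x) = P_Z),
        ∫⁻ x, ∫⁻ z, ENNReal.ofReal (c (x, G z)) ∂(κ x) ∂P_X := by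
  have hcm : Measurable fun xy : X × X => ENNReal.ofReal (c xy) :=
    ENNReal.measurable_ofReal.comp hc.measurable
  have hZ : Nonempty Z := by
    by_contra h
    rw [not_nonempty_iff] at h
    have := measure_univ (μ := P_Z)
    rw [Set.univ_eq_empty_iff.2 h, measure_empty] at this
    exact zero_ne_one this
  have hX : Nonempty X := by
    by_contra h
    rw [not_nonempty_iff] at h
    have := measure_univ (μ := P_X)
    rw [Set.univ_eq_empty_iff.2 h, measure_empty] at this
    exact zero_ne_one this
  refine le_antisymm ?_ ?_
  · -- Wc ≤ inf over kernels
    refine le_iInf fun κ => le_iInf fun hκ => le_iInf fun hbind => ?_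
    set Γ : Measure (X × X) := (P_X ⊗ₘ κ).map (Prod.map id G) with hΓdef
    have hmap : Measurable (Prod.map (id : X → X) G) := measurable_id.prodMap hG
    have h1 : Γ.map Prod.fst = P_X := by
      rw [hΓdef, Measure.map_map measurable_fst hmap]
      have : (Prod.fst ∘ Prod.map (id : X → X) G) = Prod.fst := rfl
      rw [this, ← Measure.fst, Measure.fst_compProd]
    have h2 : Γ.map Prod.snd = P_Z.map G := by
      rw [hΓdef, Measure.map_map measurable_snd hmap]
      have : (Prod.snd ∘ Prod.map (id : X → X) G) = G ∘ Prod.snd := rfl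
      rw [this, ← Measure.map_map hG measurable_snd, ← Measure.snd,
        snd_compProd_eq_bind, hbind]
    refine le_trans (iInf₂_le Γ ⟨h1, h2⟩) (le_of_eq ?_)
    have hm2 : Measurable fun p : X × Z => ENNReal.ofReal (c (p.1, G p.2)) :=
      hcm.comp (measurable_fst.prodMk (hG.comp measurable_snd))
    rw [hΓdef, lintegral_map hcm hmap]
    have heq : (fun a : X × Z => ENNReal.ofReal (c (Prod.map id G a)))
        = fun p : X × Z => ENNReal.ofReal (c (p.1, G p.2)) := rfl
    rw [heq, Measure.lintegral_compProd hm2]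
  · -- inf over kernels ≤ Wc
    refine le_iInf fun Γ => le_iInf fun hΓ => ?_
    obtain ⟨hΓ1, hΓ2⟩ := hΓ
    have hΓprob : IsProbabilityMeasure Γ := by
      constructor
      have := Measure.map_apply (measurable_fst (α := X) (β := X)) MeasurableSet.univ (μ := Γ)
      rw [hΓ1] at this
      simpa using this.symm
    set M : Measure (X × Z) := P_Z.map (fun z => (G z, z)) with hMdef
    have hf : Measurable fun z => (G z, z) := hG.prodMk measurable_id
    have hMprob : IsProbabilityMeasure M := Measure.isProbabilityMeasure_map hf.aemeasurable
    have hMfst : M.fst = P_Z.map G := by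
      rw [hMdef, Measure.fst, Measure.map_map measurable_fst hf]; rfl
    have hMsnd : M.snd = P_Z := by
      rw [hMdef, Measure.snd, Measure.map_map measurable_snd hf]
      have : (Prod.snd ∘ fun z : Z => (G z, z)) = id := rfl
      rw [this, Measure.map_id]
    set ρ : Kernel X Z := M.condKernel with hρdef
    set η : Kernel X X := Γ.condKernel with hηdef
    have hΓfst : Γ.fst = P_X := hΓ1
    have hΓdis : P_X ⊗ₘ η = Γ := by
      rw [hηdef, ← hΓfst, Measure.disintegrate]
    have hMdis : (P_Z.map G) ⊗ₘ ρ = M := by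
      rw [hρdef, ← hMfst, Measure.disintegrate]
    -- a.e. G z = x under M
    have hset : MeasurableSet {p : X × Z | G p.2 = p.1} :=
      StronglyMeasurable.measurableSet_eq_fun (hG.comp measurable_snd).stronglyMeasurable measurable_fst.stronglyMeasurable
    have haeM : ∀ᵐ p ∂M, G p.2 = p.1 := by
      rw [hMdef, ae_map_iff hf.aemeasurable hset]
      filter_upwards with z using rfl
    have haeρ : ∀ᵐ y ∂(P_Z.map G), ∀ᵐ z ∂(ρ y), G z = y := by
      rw [← hMdis] at haeM
      exact Measure.ae_ae_of_ae_compProd haeM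
    -- transfer to Γ : for a.e. (x,y) ∂Γ, Q y
    have hQset : MeasurableSet {y : X | ∀ᵐ z ∂(ρ y), G z = y} := by
      have : {y : X | ∀ᵐ z ∂(ρ y), G z = y}
          = {y : X | ρ y (Prod.mk y ⁻¹' {p : X × Z | G p.2 = p.1}ᶜ) = 0} := by
        ext y
        simp only [Set.mem_setOf_eq, ae_iff]
        rfl
      rw [this]
      exact (Kernel.measurable_kernel_prodMk_left hset.compl) (measurableSet_singleton 0)
    have haeΓ : ∀ᵐ p ∂Γ, ∀ᵐ z ∂(ρ p.2), G z = p.2 := by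
      rw [← hΓ2] at haeρ
      exact (ae_map_iff measurable_snd.aemeasurable hQset).mp haeρ
    have haeη : ∀ᵐ x ∂P_X, ∀ᵐ y ∂(η x), ∀ᵐ z ∂(ρ y), G z = y := by
      rw [← hΓdis] at haeΓ
      exact Measure.ae_ae_of_ae_compProd haeΓ
    set κ : Kernel X Z := ρ.comp η with hκdef
    have hκM : IsMarkovKernel κ := by
      rw [hκdef]; infer_instance
    have hbind : P_X.bind (fun x => κ x) = P_Z := by
      have h1 : P_X.bind (fun x => κ x) = (P_X.bind (fun x => η x)).bind (fun y => ρ y) := by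
        rw [Measure.bind_bind (Kernel.measurable η).aemeasurable (Kernel.measurable ρ).aemeasurable]
        simp only [hκdef, Kernel.comp_apply]
      have h2 : P_X.bind (fun x => η x) = P_Z.map G := by
        rw [← snd_compProd_eq_bind, hΓdis, ← hΓ2]; rfl
      have h3 : (P_Z.map G).bind (fun y => ρ y) = P_Z := by
        rw [← snd_compProd_eq_bind, hMdis, hMsnd]
      rw [h1, h2, h3]
    refine le_trans (iInf_le_of_le κ (iInf_le_of_le hκM (iInf_le _ hbind))) (le_of_eq ?_)
    -- cost equality
    have hstep : ∀ᵐ x ∂P_X,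
        ∫⁻ z, ENNReal.ofReal (c (x, G z)) ∂(κ x)
          = ∫⁻ y, ENNReal.ofReal (c (x, y)) ∂(η x) := by
      filter_upwards [haeη] with x hx
      have hg : Measurable fun z : Z => ENNReal.ofReal (c (x, G z)) :=
        hcm.comp (measurable_const.prodMk hG)
      rw [hκdef, Kernel.lintegral_comp _ _ _ hg]
      refine lintegral_congr_ae ?_
      filter_upwards [hx] with y hy
      have : ∫⁻ z, ENNReal.ofReal (c (x, G z)) ∂(ρ y)
          = ∫⁻ _, ENNReal.ofReal (c (x, y)) ∂(ρ y) := by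
        refine lintegral_congr_ae ?_
        filter_upwards [hy] with z hz
        rw [hz]
      rw [this, lintegral_const]
      simp
    rw [lintegral_congr_ae hstep, ← Measure.lintegral_compProd hcm, hΓdis]
end

section
/- Let X and Z be measurable spaces, (X, d) a metric space, let P_X be a Borel probability measure on X, P_Z a Borel probability measure on Z, G : Z → X a Borel measurable map, and let κ be a Markov kernel from X to Z whose aggregated posterior ∫ κ(x, ·) dP_X(x) equals P_Z. Then the pushforward of the joint measure P_X ⊗ κ (the measure on X × Z with first marginal P_X and conditional κ) under the map (x, z) ↦ (x, G(z)) is a coupling of P_X and G_#P_Z; consequently, for any measurable nonnegative cost c : X × X → ℝ, W_c(P_X, G_#P_Z) ≤ ∬ c(x, G(z)) dκ(x, dz) dP_X(x). -/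
open MeasureTheory ENNReal NNReal ProbabilityTheory

/-- `Γ` is a coupling of `μ` and `ν`: a measure on the product whose first marginal is `μ`
and whose second marginal is `ν`. -/
def IsCoupling {S T : Type*} [MeasurableSpace S] [MeasurableSpace T]
    (Γ : Measure (S × T)) (μ : Measure S) (ν : Measure T) : Prop :=
  Γ.map Prod.fst = μ ∧ Γ.map Prod.snd = ν

/-- Let `κ` be a Markov kernel (probabilistic encoder) from `X` to `Z` whose aggregated
posterior equals the prior `P_Z`, and `G : Z → X` a measurable decoder. Then the
pushforward of the joint measure `P_X ⊗ₘ κ` under `(x, z) ↦ (x, G z)` is a coupling of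
`P_X` and `G_#P_Z`; consequently, for any measurable nonnegative cost `c`,
`W_c(P_X, G_#P_Z) ≤ ∬ c(x, G(z)) κ(x, dz) dP_X(x)`. -/
theorem coupling_from_kernel_and_wc_le
    {X Z : Type*} [MetricSpace X] [MeasurableSpace X] [BorelSpace X] [MeasurableSpace Z]
    (P_X : Measure X) [IsProbabilityMeasure P_X]
    (P_Z : Measure Z) [IsProbabilityMeasure P_Z]
    (G : Z → X) (hG : Measurable G)
    (κ : Kernel X Z) [IsMarkovKernel κ]
    (hκ : P_X.bind (fun x => κ x) = P_Z)
    (c : X × X → ℝ) (hcm : Measurable c) (hc0 : ∀ xy, 0 ≤ c xy) :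
    IsCoupling ((P_X.compProd κ).map (fun xz => (xz.1, G xz.2))) P_X (P_Z.map G) ∧
      Wc c P_X (P_Z.map G) ≤ ∫⁻ x, ∫⁻ z, ENNReal.ofReal (c (x, G z)) ∂(κ x) ∂P_X := by
  have hmap : Measurable (fun xz : X × Z => (xz.1, G xz.2)) :=
    measurable_fst.prodMk (hG.comp measurable_snd)
  have hfst : ((P_X.compProd κ).map (fun xz : X × Z => (xz.1, G xz.2))).map Prod.fst = P_X := by
    rw [Measure.map_map measurable_fst hmap]
    have h1 : (Prod.fst ∘ fun xz : X × Z => (xz.1, G xz.2)) = Prod.fst := rfl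
    rw [h1]
    exact Measure.fst_compProd P_X κ
  have hsndc : (P_X.compProd κ).map Prod.snd = P_X.bind (fun x => κ x) := by
    ext s hs
    rw [Measure.map_apply measurable_snd hs, Measure.bind_apply hs (Kernel.measurable κ).aemeasurable,
      Measure.compProd_apply (measurable_snd hs)]
    rfl
  have hsnd : ((P_X.compProd κ).map (fun xz : X × Z => (xz.1, G xz.2))).map Prod.snd
      = P_Z.map G := by
    rw [Measure.map_map measurable_snd hmap]
    have h1 : (Prod.snd ∘ fun xz : X × Z => (xz.1, G xz.2)) = G ∘ Prod.snd := rfl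
    rw [h1, ← Measure.map_map hG measurable_snd, hsndc, hκ]
  refine ⟨⟨hfst, hsnd⟩, ?_⟩
  have hle := iInf₂_le (α := ℝ≥0∞)
    (f := fun (Γ : Measure (X × X)) (_ : Γ.map Prod.fst = P_X ∧ Γ.map Prod.snd = P_Z.map G) =>
      ∫⁻ xy, ENNReal.ofReal (c xy) ∂Γ)
    ((P_X.compProd κ).map (fun xz : X × Z => (xz.1, G xz.2))) ⟨hfst, hsnd⟩
  refine le_trans hle ?_
  rw [MeasureTheory.lintegral_map (by exact (hcm.ennreal_ofReal)) hmap]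
  exact le_of_eq (Measure.lintegral_compProd ((hcm.ennreal_ofReal).comp hmap))
end
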